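/- Let x be a decision node and i a buyer with f_i(x) > 1 and κ_i(x) < t − 1. Then p_i(x + e_{−i}) ≤ p_i(x), and the inequality is strict if and only if κ_i(x + e_i) = t − 1. -/

import Mathlib

open Finset

noncomputable section

/-- The opponent of buyer `i`. -/
def other (i : Fin 2) : Fin 2 := 1 - i

/-- The standard unit vector of buyer `i`: winning one item moves `x` to `x + e i`. -/
def e (i : Fin 2) : Fin 2 → ℕ := Pi.single i 1

/-- Remaining supply `t(x) = T - x₁ - x₂` at node `x`. -/
def supply (T : ℕ) (x : Fin 2 → ℕ) : ℕ := T - (x 0 + x 1)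

/-- `x` is a decision node: `x₁ + x₂ < T`. -/
def IsDecision (T : ℕ) (x : Fin 2 → ℕ) : Prop := x 0 + x 1 < T

/-- Incremental value `v_i(k|x) = v_i(x_i + k)`. -/
def val (v : Fin 2 → ℕ → ℝ) (i : Fin 2) (k : ℕ) (x : Fin 2 → ℕ) : ℝ := v i (x i + k)

/-- Valuations are nonnegative and weakly decreasing. -/
def Admissible (v : Fin 2 → ℕ → ℝ) : Prop := ∀ i k, 0 ≤ v i k ∧ v i (k + 1) ≤ v i k

/-- Greedy payoff `μ̄_i(k|x) = Σ_{j=1}^k v_i(j|x) - k · v_{-i}(t-k+1|x)`. -/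
def gbar (T : ℕ) (v : Fin 2 → ℕ → ℝ) (i : Fin 2) (k : ℕ) (x : Fin 2 → ℕ) : ℝ :=
  (∑ j ∈ Finset.Icc 1 k, val v i j x) - (k : ℝ) * val v (other i) (supply T x - k + 1) x

/-- Greedy utility `μ_i(x) = max_{0 ≤ k ≤ t} μ̄_i(k|x)` (equal to `0` at terminal nodes). -/
def gu (T : ℕ) (v : Fin 2 → ℕ → ℝ) (i : Fin 2) (x : Fin 2 → ℕ) : ℝ :=
  Finset.sup' (Finset.range (supply T x + 1)) ⟨0, Finset.mem_range.mpr (Nat.succ_pos _)⟩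
    (fun k => gbar T v i k x)

/-- Greedy demand `κ_i(x)`: the least `k ∈ {0,…,t}` attaining the greedy utility. -/
def gd (T : ℕ) (v : Fin 2 → ℕ → ℝ) (i : Fin 2) (x : Fin 2 → ℕ) : ℕ :=
  sInf {k | k ≤ supply T x ∧ gbar T v i k x = gu T v i x}

/-- Duopsony factor `f_i(x) = max ({k ∈ {1,…,t} : v_i(k|x) > v_{-i}(t-k+1|x)} ∪ {0})`. -/
def df (T : ℕ) (v : Fin 2 → ℕ → ℝ) (i : Fin 2) (x : Fin 2 → ℕ) : ℕ :=
  sSup {k | 1 ≤ k ∧ k ≤ supply T x ∧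
    val v (other i) (supply T x - k + 1) x < val v i k x}

/-- Baseline price `β_i(x)`. -/
def base (T : ℕ) (v : Fin 2 → ℕ → ℝ) (i : Fin 2) (x : Fin 2 → ℕ) : ℝ :=
  if df T v i x = 0 then val v i 1 x
  else val v (other i) (supply T x - gd T v i x + 1) x

/-- Threshold price `p_i(x) = v_i(1|x) + μ_i(x+e_i) - μ_i(x+e_{-i})`. -/
def tp (T : ℕ) (v : Fin 2 → ℕ → ℝ) (i : Fin 2) (x : Fin 2 → ℕ) : ℝ :=
  val v i 1 x + gu T v i (x + e i) - gu T v i (x + e (other i))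


lemma other_ne (i : Fin 2) : other i ≠ i := by fin_cases i <;> decide

lemma e_apply_other (i : Fin 2) : e (other i) i = 0 := by
  unfold e
  exact Pi.single_eq_of_ne (other_ne i).symm 1

lemma e_sum (j : Fin 2) : e j 0 + e j 1 = 1 := by fin_cases j <;> simp [e]

lemma supply_add (T : ℕ) (x : Fin 2 → ℕ) (j : Fin 2) :
    supply T (x + e j) = supply T x - 1 := by
  simp only [supply, Pi.add_apply]
  have := e_sum j
  omega

lemma gbar_other (T : ℕ) (v : Fin 2 → ℕ → ℝ) (i : Fin 2) (x : Fin 2 → ℕ)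
    (k : ℕ) (hk : k + 1 ≤ supply T x) :
    gbar T v i k (x + e (other i)) = gbar T v i k x := by
  have hsup := supply_add T x (other i)
  have hi : (x + e (other i)) i = x i := by
    simp [Pi.add_apply, e_apply_other]
  have ho : (x + e (other i)) (other i) = x (other i) + 1 := by
    simp [Pi.add_apply, e, Pi.single_eq_same]
  unfold gbar _root_.val
  simp only [hi, ho, hsup]
  have harg : x (other i) + 1 + (supply T x - 1 - k + 1)
      = x (other i) + (supply T x - k + 1) := by omega
  rw [harg]

lemma sup'_eq_of {s s' : Finset ℕ} {f g : ℕ → ℝ} (hs : s.Nonempty) (hs' : s'.Nonempty)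
    (h : s = s') (hfg : ∀ k ∈ s, f k = g k) : s.sup' hs f = s'.sup' hs' g :=
  Finset.sup'_congr hs h hfg

lemma gd_mem (T : ℕ) (v : Fin 2 → ℕ → ℝ) (i : Fin 2) (x : Fin 2 → ℕ) :
    gd T v i x ≤ supply T x ∧ gbar T v i (gd T v i x) x = gu T v i x := by
  have hne : {k | k ≤ supply T x ∧ gbar T v i k x = gu T v i x}.Nonempty := by
    obtain ⟨b, hb, hbe⟩ := Finset.exists_mem_eq_sup' (Finset.nonempty_range_add_one
      (n := supply T x)) (fun k => gbar T v i k x)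
    exact ⟨b, Nat.lt_succ_iff.mp (Finset.mem_range.mp hb), hbe.symm⟩
  exact Nat.sInf_mem hne

lemma gbar_le_gu (T : ℕ) (v : Fin 2 → ℕ → ℝ) (i : Fin 2) (x : Fin 2 → ℕ)
    (k : ℕ) (hk : k ≤ supply T x) : gbar T v i k x ≤ gu T v i x :=
  Finset.le_sup' (fun k => gbar T v i k x) (Finset.mem_range.mpr (by omega))

lemma key_iff (f : ℕ → ℝ) (n : ℕ) (h1 : (Finset.range n).Nonempty) :
    ((Finset.range n).sup' h1 f
        < (Finset.range (n+1)).sup' Finset.nonempty_range_add_one f) ↔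
      sInf {k | k ≤ n ∧
        f k = (Finset.range (n+1)).sup' Finset.nonempty_range_add_one f} = n := by
  set M := (Finset.range (n+1)).sup' Finset.nonempty_range_add_one f with hM
  set m := (Finset.range n).sup' h1 f with hm
  have hbound : ∀ k, k < n → f k ≤ m := fun k hk =>
    Finset.le_sup' f (Finset.mem_range.mpr hk)
  have hboundM : ∀ k, k ≤ n → f k ≤ M := fun k hk =>
    Finset.le_sup' f (Finset.mem_range.mpr (by omega))
  obtain ⟨b, hb, hbe⟩ := Finset.exists_mem_eq_sup' (Finset.nonempty_range_add_one (n := n)) f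
  rw [Finset.mem_range] at hb
  obtain ⟨c, hc, hce⟩ := Finset.exists_mem_eq_sup' h1 f
  rw [Finset.mem_range] at hc
  constructor
  · intro hlt
    have hbn : b = n := by
      by_contra h
      have hbn' : b < n := by omega
      have h2 : M ≤ m := by rw [hM, hbe]; exact hbound b hbn'
      linarith
    have hnS : n ∈ {k | k ≤ n ∧ f k = M} := ⟨le_refl n, by rw [hM, hbe, hbn]⟩
    have hle := Nat.sInf_le hnS
    have hmem := Nat.sInf_mem (⟨n, hnS⟩ : Set.Nonempty {k | k ≤ n ∧ f k = M})
    by_contra hne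
    have hlt' : sInf {k | k ≤ n ∧ f k = M} < n := lt_of_le_of_ne hle hne
    have h3 := hbound _ hlt'
    rw [hmem.2] at h3
    linarith
  · intro hs
    have hSne : Set.Nonempty {k | k ≤ n ∧ f k = M} := ⟨b, by omega, hbe.symm⟩
    have hmem := Nat.sInf_mem hSne
    rw [hs] at hmem
    have hcM : f c < M := by
      rcases lt_or_eq_of_le (hboundM c (by omega)) with h | h
      · exact h
      · exfalso
        have hcS : c ∈ {k | k ≤ n ∧ f k = M} := ⟨by omega, h⟩
        have := Nat.sInf_le hcS
        omega
    rw [hm, hce]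
    exact hcM


/-- Evolution of the threshold price upon losing. -/
theorem stmt8 (T : ℕ) (v : Fin 2 → ℕ → ℝ) (hv : Admissible v)
    (x : Fin 2 → ℕ) (hx : IsDecision T x) (i : Fin 2)
    (hf : 1 < df T v i x) (hk : gd T v i x < supply T x - 1) :
    tp T v i (x + e (other i)) ≤ tp T v i x ∧
    (tp T v i (x + e (other i)) < tp T v i x ↔
      gd T v i (x + e i) = supply T x - 1) := by
  set t := supply T x with ht
  have ht2 : 2 ≤ t := by omega
  have hne1 : (Finset.range (t-1)).Nonempty := Finset.nonempty_range_iff.mpr (by omega)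
  have hsz : supply T (x + e i) = t - 1 := by rw [supply_add, ht]
  have hsy : supply T (x + e (other i)) = t - 1 := by rw [supply_add, ht]
  have hs3 : supply T (x + e (other i) + e i) = t - 2 := by
    rw [supply_add, hsy]; omega
  have hs4 : supply T (x + e (other i) + e (other i)) = t - 2 := by
    rw [supply_add, hsy]; omega
  have hyz : x + e (other i) + e i = x + e i + e (other i) :=
    add_right_comm x (e (other i)) (e i)
  have hval : _root_.val v i 1 (x + e (other i)) = _root_.val v i 1 x := by
    simp [_root_.val, Pi.add_apply, e_apply_other]
  have E1 : gu T v i (x + e i) = (Finset.range (t-1+1)).sup' Finset.nonempty_range_add_one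
      (fun k => gbar T v i k (x + e i)) := by
    unfold gu
    exact sup'_eq_of _ _ (by rw [hsz]) (fun k _ => rfl)
  have E2 : gu T v i (x + e (other i)) = (Finset.range (t-1+1)).sup' Finset.nonempty_range_add_one
      (fun k => gbar T v i k x) := by
    unfold gu
    refine sup'_eq_of _ _ (by rw [hsy]) (fun k hkm => ?_)
    rw [Finset.mem_range, hsy] at hkm
    exact gbar_other T v i x k (by omega)
  have E3 : gu T v i (x + e (other i) + e i) = (Finset.range (t-1)).sup' hne1
      (fun k => gbar T v i k (x + e i)) := by
    unfold gu
    refine sup'_eq_of _ _ (by rw [hs3]; congr 1; omega) (fun k hkm => ?_)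
    rw [Finset.mem_range, hs3] at hkm
    rw [hyz]
    exact gbar_other T v i (x + e i) k (by rw [hsz]; omega)
  have E4 : gu T v i (x + e (other i) + e (other i)) = (Finset.range (t-1)).sup' hne1
      (fun k => gbar T v i k x) := by
    unfold gu
    refine sup'_eq_of _ _ (by rw [hs4]; congr 1; omega) (fun k hkm => ?_)
    rw [Finset.mem_range, hs4] at hkm
    rw [gbar_other T v i (x + e (other i)) k (by rw [hsy]; omega)]
    exact gbar_other T v i x k (by omega)
  have hTx : tp T v i x = val v i 1 x
      + (Finset.range (t-1+1)).sup' Finset.nonempty_range_add_one (fun k => gbar T v i k (x + e i))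
      - (Finset.range (t-1+1)).sup' Finset.nonempty_range_add_one (fun k => gbar T v i k x) := by
    unfold tp
    rw [E1, E2]
  have hTy : tp T v i (x + e (other i)) = val v i 1 x
      + (Finset.range (t-1)).sup' hne1 (fun k => gbar T v i k (x + e i))
      - (Finset.range (t-1)).sup' hne1 (fun k => gbar T v i k x) := by
    unfold tp
    rw [E3, E4, hval]
  obtain ⟨hkt, hkF⟩ := gd_mem T v i x
  have hklt : gd T v i x < t - 1 := hk
  have hFeq : (Finset.range (t-1)).sup' hne1 (fun k => gbar T v i k x)
      = (Finset.range (t-1+1)).sup' Finset.nonempty_range_add_one (fun k => gbar T v i k x) := by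
    refine le_antisymm (Finset.sup'_le _ _ fun k hkm => ?_)
      (Finset.sup'_le _ _ fun k hkm => ?_)
    · rw [Finset.mem_range] at hkm
      exact Finset.le_sup' (fun j => gbar T v i j x) (Finset.mem_range.mpr (by omega))
    · rw [Finset.mem_range] at hkm
      calc gbar T v i k x ≤ gu T v i x := gbar_le_gu T v i x k (by omega)
        _ = gbar T v i (gd T v i x) x := hkF.symm
        _ ≤ _ := Finset.le_sup' (fun j => gbar T v i j x) (Finset.mem_range.mpr hklt)
  have hGmono : (Finset.range (t-1)).sup' hne1 (fun k => gbar T v i k (x + e i))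
      ≤ (Finset.range (t-1+1)).sup' Finset.nonempty_range_add_one
        (fun k => gbar T v i k (x + e i)) :=
    Finset.sup'_le _ _ fun k hkm => Finset.le_sup' (fun j => gbar T v i j (x + e i))
      (by rw [Finset.mem_range] at hkm ⊢; omega)
  have hgdz : gd T v i (x + e i) = sInf {k | k ≤ t - 1 ∧ gbar T v i k (x + e i)
      = (Finset.range (t-1+1)).sup' Finset.nonempty_range_add_one
        (fun k => gbar T v i k (x + e i))} := by
    unfold gd
    simp only [hsz, E1]
  have hts : supply T x - 1 = t - 1 := by omega
  constructor
  · rw [hTy, hTx, hFeq]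
    linarith
  · rw [hTy, hTx, hFeq, hgdz]
    constructor
    · intro hlt
      exact (key_iff (fun k => gbar T v i k (x + e i)) (t-1) hne1).mp (by linarith)
    · intro hEq
      have hm := (key_iff (fun k => gbar T v i k (x + e i)) (t-1) hne1).mpr hEq
      linarith
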